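/- Assume γ₁/γ₂ ≤ α and set l = √γ₁ + √(((1−α)/α)·(γ₂ − γ₁)). Then the following are equivalent: (a) every P ∈ D satisfies P({t ∈ ℝ : t·y ≤ b}) ≥ 1 − α; (b) μ·y + l·√(Σ·y²) ≤ b. (This is the first case of the paper's Theorem 1: the distributionally robust decision-dependent chance constraint is equivalent to a second-order cone constraint.) -/

import Mathlib

set_option maxHeartbeats 1000000

open MeasureTheory Real


lemma aux_int_sq (P : Measure ℝ) [IsFiniteMeasure P] (h : MemLp (id : ℝ → ℝ) 2 P) (a : ℝ) :
    Integrable (fun t => (t - a)^2) P := by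
  have h' : MemLp (fun t : ℝ => t - a) 2 P := h.sub (memLp_const a)
  exact h'.integrable_sq

lemma aux_int_id (P : Measure ℝ) [IsFiniteMeasure P] (h : MemLp (id : ℝ → ℝ) 2 P) :
    Integrable (fun t : ℝ => t) P := h.integrable one_le_two

lemma markov_aux (P : Measure ℝ) [IsProbabilityMeasure P] (h2 : MemLp (id : ℝ → ℝ) 2 P)
    (c μ lam : ℝ) (hlam : 0 ≤ c - μ + lam) :
    (c - μ + lam)^2 * (P {t : ℝ | c < t}).toReal ≤ ∫ t, (t - μ + lam)^2 ∂P := by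
  have hf : Integrable (fun t => (t - μ + lam)^2) P := by
    have := aux_int_sq P h2 (μ - lam)
    convert this using 2 with t
    ring
  have hS : MeasurableSet {t : ℝ | c < t} := measurableSet_Ioi
  have hind : Integrable ({t : ℝ | c < t}.indicator fun _ => (c - μ + lam)^2) P :=
    (integrable_const _).indicator hS
  have hmono : ∀ t, {t : ℝ | c < t}.indicator (fun _ => (c - μ + lam)^2) t ≤ (t - μ + lam)^2 := by
    intro t
    by_cases ht : t ∈ {t : ℝ | c < t}
    · rw [Set.indicator_of_mem ht]
      have h1 : c < t := ht
      nlinarith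
    · rw [Set.indicator_of_notMem ht]; positivity
  calc (c - μ + lam)^2 * (P {t : ℝ | c < t}).toReal
      = ∫ t, {t : ℝ | c < t}.indicator (fun _ => (c - μ + lam)^2) t ∂P := by
        rw [integral_indicator_const _ hS, smul_eq_mul, mul_comm]; rfl
    _ ≤ ∫ t, (t - μ + lam)^2 ∂P := integral_mono hind hf hmono

lemma moment_expand (P : Measure ℝ) [IsProbabilityMeasure P] (h2 : MemLp (id : ℝ → ℝ) 2 P)
    (μ lam : ℝ) :
    ∫ t, (t - μ + lam)^2 ∂P
      = (∫ t, (t - μ)^2 ∂P) + 2*lam*((∫ t, t ∂P) - μ) + lam^2 := by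
  have h1 : Integrable (fun t => (t - μ)^2) P := aux_int_sq P h2 μ
  have hid : Integrable (fun t : ℝ => t) P := aux_int_id P h2
  have h3 : Integrable (fun t : ℝ => 2*lam*(t - μ)) P :=
    ((hid.sub (integrable_const μ)).const_mul _)
  have he : (fun t : ℝ => (t - μ + lam)^2)
      = fun t => ((t - μ)^2 + 2*lam*(t - μ)) + lam^2 := by funext t; ring
  rw [he]
  rw [integral_add (f := fun t : ℝ => (t - μ)^2 + 2*lam*(t - μ)) (g := fun _ => lam^2)
      (h1.add h3) (integrable_const _),
    integral_add (f := fun t : ℝ => (t - μ)^2) (g := fun t : ℝ => 2*lam*(t - μ)) h1 h3,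
    integral_const, MeasureTheory.integral_const_mul, integral_sub hid (integrable_const μ), integral_const]
  simp [measure_univ]


lemma forward_aux (α γ₁ γ₂ Sig μ c : ℝ) (hα0 : 0 < α) (hα1 : α < 1) (hγ₁ : 0 < γ₁)
    (hcase : γ₁ ≤ α * γ₂) (hSig : 0 < Sig)
    (hc : μ + (Real.sqrt γ₁ + Real.sqrt (((1 - α)/α)*(γ₂ - γ₁))) * Real.sqrt Sig ≤ c)
    (P : Measure ℝ) [IsProbabilityMeasure P] (h2 : MemLp (id : ℝ → ℝ) 2 P)
    (hm : ((∫ t, t ∂P) - μ)^2 ≤ γ₁ * Sig) (hv : (∫ t, (t - μ)^2 ∂P) ≤ γ₂ * Sig) :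
    (P {t : ℝ | c < t}).toReal ≤ α := by
  obtain ⟨s, hs⟩ : ∃ s, s = Real.sqrt Sig := ⟨_, rfl⟩
  obtain ⟨g, hg⟩ : ∃ g, g = Real.sqrt γ₁ := ⟨_, rfl⟩
  obtain ⟨d, hd⟩ : ∃ d, d = Real.sqrt (((1 - α)/α)*(γ₂ - γ₁)) := ⟨_, rfl⟩
  have h1α : 0 < 1 - α := by linarith
  have hs0 : 0 < s := hs ▸ Real.sqrt_pos.2 hSig
  have hg0 : 0 < g := hg ▸ Real.sqrt_pos.2 hγ₁
  have hγ₂0 : 0 < γ₂ := lt_of_lt_of_le hγ₁ (hcase.trans (by nlinarith))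
  have hΔ : 0 < γ₂ - γ₁ := by nlinarith
  have hs2 : s^2 = Sig := by rw [hs]; exact Real.sq_sqrt hSig.le
  have hg2 : g^2 = γ₁ := by rw [hg]; exact Real.sq_sqrt hγ₁.le
  have hd2 : d^2 = ((1 - α)/α)*(γ₂ - γ₁) := by
    rw [hd]; exact Real.sq_sqrt (mul_nonneg (div_nonneg h1α.le hα0.le) hΔ.le)
  have hd0 : 0 < d := by
    rw [hd]; exact Real.sqrt_pos.2 (mul_pos (div_pos h1α hα0) hΔ)
  have hc' : μ + (g + d) * s ≤ c := by rw [hg, hd, hs]; exact hc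
  obtain ⟨lam, hlamdef⟩ : ∃ lam, lam = (α*d/(1 - α) - g) * s := ⟨_, rfl⟩
  have e1 : α*d^2 = (1 - α)*(γ₂ - γ₁) := by
    rw [hd2]; field_simp
  have hsqcmp : ((1 - α)*g)^2 ≤ (α*d)^2 := by
    rw [mul_pow, mul_pow, hg2]
    nlinarith [e1, mul_le_mul_of_nonneg_left hcase h1α.le]
  have hlo : (1 - α) * g ≤ α * d := by
    nlinarith [hsqcmp, add_pos (mul_pos h1α hg0) (mul_pos hα0 hd0)]
  have hlam0 : 0 ≤ lam := by
    have h0 : 0 ≤ α*d/(1 - α) - g := by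
      rw [sub_nonneg, le_div_iff₀ h1α]; linarith
    rw [hlamdef]; positivity
  have hA : 0 < d/(1 - α) * s := by positivity
  have hclam : d/(1 - α) * s ≤ c - μ + lam := by
    have key : d/(1 - α)*s = (g + d)*s + lam := by
      rw [hlamdef]; field_simp; ring
    linarith
  have hmarkov := markov_aux P h2 c μ lam (by linarith)
  have hexp := moment_expand P h2 μ lam
  have hmμ : (∫ t, t ∂P) - μ ≤ g * s := by
    have h1 : ((∫ t, t ∂P) - μ)^2 ≤ (g*s)^2 := by rw [mul_pow, hg2, hs2]; exact hm
    nlinarith [mul_pos hg0 hs0]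
  have hbound : ∫ t, (t - μ + lam)^2 ∂P ≤ γ₂*Sig + 2*lam*(g*s) + lam^2 := by
    rw [hexp]; nlinarith [mul_le_mul_of_nonneg_left hmμ hlam0]
  have hident : γ₂*Sig + 2*lam*(g*s) + lam^2 = α * (d/(1 - α)*s)^2 := by
    rw [hlamdef]
    have h1αne : (1 : ℝ) - α ≠ 0 := ne_of_gt h1α
    field_simp
    linear_combination (-(1-α)*s^2) * e1 + (-(1-α)^2*γ₂) * hs2 + (-(1-α)^2*s^2) * hg2
  have hsq : (d/(1 - α)*s)^2 ≤ (c - μ + lam)^2 := by nlinarith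
  have hP0 : 0 ≤ (P {t : ℝ | c < t}).toReal := ENNReal.toReal_nonneg
  have hA2 : 0 < (d/(1 - α)*s)^2 := by positivity
  have hchain : (d/(1 - α)*s)^2 * (P {t : ℝ | c < t}).toReal ≤ (d/(1 - α)*s)^2 * α := by
    calc (d/(1 - α)*s)^2 * (P {t : ℝ | c < t}).toReal
        ≤ (c - μ + lam)^2 * (P {t : ℝ | c < t}).toReal :=
          mul_le_mul_of_nonneg_right hsq hP0
      _ ≤ ∫ t, (t - μ + lam)^2 ∂P := hmarkov
      _ ≤ γ₂*Sig + 2*lam*(g*s) + lam^2 := hbound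
      _ = (d/(1 - α)*s)^2 * α := by rw [hident]; ring
  exact le_of_mul_le_mul_left hchain hA2


lemma integrable_dirac' (f : ℝ → ℝ) (x : ℝ) : Integrable f (Measure.dirac x) := by
  have hae : (fun _ : ℝ => f x) =ᵐ[Measure.dirac x] f := by
    rw [Filter.EventuallyEq, ae_dirac_eq]
    exact Filter.eventually_pure.2 rfl
  exact (integrable_const (f x)).congr hae

lemma integral_twopoint (x1 u p : ℝ) (hp0 : 0 ≤ p) (hp1 : p ≤ 1) (f : ℝ → ℝ) :
    ∫ t, f t ∂(ENNReal.ofReal (1 - p) • Measure.dirac x1 + ENNReal.ofReal p • Measure.dirac u)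
      = (1 - p) * f x1 + p * f u := by
  have h1 : Integrable f (ENNReal.ofReal (1 - p) • Measure.dirac x1) :=
    (integrable_dirac' f x1).smul_measure ENNReal.ofReal_ne_top
  have h2 : Integrable f (ENNReal.ofReal p • Measure.dirac u) :=
    (integrable_dirac' f u).smul_measure ENNReal.ofReal_ne_top
  rw [integral_add_measure h1 h2, integral_smul_measure, integral_smul_measure,
    integral_dirac, integral_dirac, ENNReal.toReal_ofReal (by linarith),
    ENNReal.toReal_ofReal hp0]
  simp [smul_eq_mul]

lemma twopoint_prob (x1 u p : ℝ) (hp0 : 0 ≤ p) (hp1 : p ≤ 1) :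
    IsProbabilityMeasure
      (ENNReal.ofReal (1 - p) • Measure.dirac x1 + ENNReal.ofReal p • Measure.dirac u) := by
  constructor
  rw [Measure.add_apply, Measure.smul_apply, Measure.smul_apply]
  simp only [measure_univ, smul_eq_mul, mul_one]
  rw [← ENNReal.ofReal_add (by linarith) hp0, ← ENNReal.ofReal_one]
  norm_num

lemma twopoint_memℒp (x1 u p : ℝ) (hp0 : 0 ≤ p) (hp1 : p ≤ 1) :
    MemLp (id : ℝ → ℝ) 2
      (ENNReal.ofReal (1 - p) • Measure.dirac x1 + ENNReal.ofReal p • Measure.dirac u) := by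
  set P := ENNReal.ofReal (1 - p) • Measure.dirac x1 + ENNReal.ofReal p • Measure.dirac u with hP
  haveI : IsProbabilityMeasure P := twopoint_prob x1 u p hp0 hp1
  set g0 : ℝ → ℝ := fun t => if t = u then u else x1 with hg0
  have hmg : Measurable g0 := by
    apply Measurable.ite (MeasurableSet.singleton u) measurable_const measurable_const
  have hsub : {t : ℝ | ¬ g0 t = id t} ⊆ ({x1, u} : Set ℝ)ᶜ := by
    intro t ht
    simp only [Set.mem_setOf_eq, id_eq] at ht
    simp only [Set.mem_compl_iff, Set.mem_insert_iff, Set.mem_singleton_iff]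
    rintro (rfl | rfl)
    · apply ht; by_cases h : t = u
      · simp [hg0, h]
      · simp [hg0, h]
    · apply ht; simp [hg0]
  have hnull : P (({x1, u} : Set ℝ)ᶜ) = 0 := by
    rw [hP, Measure.add_apply, Measure.smul_apply, Measure.smul_apply]
    rw [Measure.dirac_apply' _ (MeasurableSet.compl (by measurability)),
      Measure.dirac_apply' _ (MeasurableSet.compl (by measurability))]
    simp
  have hae : g0 =ᵐ[P] (id : ℝ → ℝ) := by
    rw [Filter.EventuallyEq, ae_iff]
    exact measure_mono_null hsub hnull
  have hbd : MemLp g0 2 P := by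
    apply MemLp.of_bound hmg.aestronglyMeasurable (max |x1| |u|)
    filter_upwards with t
    by_cases h : t = u
    · simp only [hg0, h, if_true, Real.norm_eq_abs]; exact le_max_right _ _
    · simp only [hg0, if_neg h, Real.norm_eq_abs]; exact le_max_left _ _
  exact hbd.ae_eq hae


lemma construct_aux (α γ₁ γ₂ Sig μ c : ℝ) (hα0 : 0 < α) (hα1 : α < 1) (hγ₁ : 0 < γ₁)
    (hcase : γ₁ ≤ α * γ₂) (hSig : 0 < Sig)
    (hc : c < μ + (Real.sqrt γ₁ + Real.sqrt (((1 - α)/α)*(γ₂ - γ₁))) * Real.sqrt Sig) :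
    ∃ P : Measure ℝ, IsProbabilityMeasure P ∧ MemLp (id : ℝ → ℝ) 2 P ∧
      ((∫ t, t ∂P) - μ)^2 ≤ γ₁ * Sig ∧ (∫ t, (t - μ)^2 ∂P) ≤ γ₂ * Sig ∧
      (P {t : ℝ | t ≤ c}).toReal < 1 - α := by
  obtain ⟨s, hs⟩ : ∃ s, s = Real.sqrt Sig := ⟨_, rfl⟩
  obtain ⟨g, hg⟩ : ∃ g, g = Real.sqrt γ₁ := ⟨_, rfl⟩
  obtain ⟨d, hd⟩ : ∃ d, d = Real.sqrt (((1 - α)/α)*(γ₂ - γ₁)) := ⟨_, rfl⟩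
  have h1α : 0 < 1 - α := by linarith
  have hs0 : 0 < s := hs ▸ Real.sqrt_pos.2 hSig
  have hg0 : 0 < g := hg ▸ Real.sqrt_pos.2 hγ₁
  have hγ₂0 : 0 < γ₂ := lt_of_lt_of_le hγ₁ (hcase.trans (by nlinarith))
  have hΔ : 0 < γ₂ - γ₁ := by nlinarith
  have hs2 : s^2 = Sig := by rw [hs]; exact Real.sq_sqrt hSig.le
  have hg2 : g^2 = γ₁ := by rw [hg]; exact Real.sq_sqrt hγ₁.le
  have hd2 : d^2 = ((1 - α)/α)*(γ₂ - γ₁) := by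
    rw [hd]; exact Real.sq_sqrt (mul_nonneg (div_nonneg h1α.le hα0.le) hΔ.le)
  have hd0 : 0 < d := by
    rw [hd]; exact Real.sqrt_pos.2 (mul_pos (div_pos h1α hα0) hΔ)
  have hc' : c < μ + (g + d) * s := by rw [hg, hd, hs]; exact hc
  -- choose p
  obtain ⟨K, hK⟩ : ∃ K, K = (c - μ)/s - g := ⟨_, rfl⟩
  have hKd : K < d := by
    rw [hK]
    have : (c - μ)/s < g + d := by rw [div_lt_iff₀ hs0]; nlinarith
    linarith
  obtain ⟨M, hM⟩ : ∃ M, M = max K 0 := ⟨_, rfl⟩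
  have hM0 : 0 ≤ M := hM ▸ le_max_right _ _
  have hMd : M < d := by rw [hM]; exact max_lt hKd hd0
  have hKM : K ≤ M := hM ▸ le_max_left _ _
  obtain ⟨q, hq⟩ : ∃ q, q = (γ₂ - γ₁)/(M^2 + (γ₂ - γ₁)) := ⟨_, rfl⟩
  have hden : 0 < M^2 + (γ₂ - γ₁) := by positivity
  have hq1 : q ≤ 1 := by rw [hq, div_le_one hden]; nlinarith
  have hαq : α < q := by
    rw [hq, lt_div_iff₀ hden]
    have hM2d2 : M^2 < d^2 := by nlinarith
    have : α * d^2 = (1 - α) * (γ₂ - γ₁) := by rw [hd2]; field_simp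
    nlinarith
  obtain ⟨p, hp⟩ : ∃ p, p = (α + q)/2 := ⟨_, rfl⟩
  have hp0 : 0 < p := by rw [hp]; linarith
  have hpα : α < p := by rw [hp]; linarith
  have hpq : p < q := by rw [hp]; linarith
  have hp1 : p < 1 := lt_of_lt_of_le hpq hq1
  have h1p : 0 < 1 - p := by linarith
  obtain ⟨dp, hdp⟩ : ∃ dp, dp = Real.sqrt (((1 - p)/p)*(γ₂ - γ₁)) := ⟨_, rfl⟩
  have hdp2 : dp^2 = ((1 - p)/p)*(γ₂ - γ₁) := by
    rw [hdp]; exact Real.sq_sqrt (mul_nonneg (div_nonneg h1p.le hp0.le) hΔ.le)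
  have hdp0 : 0 < dp := by
    rw [hdp]; exact Real.sqrt_pos.2 (mul_pos (div_pos h1p hp0) hΔ)
  have hdpM : M < dp := by
    have h1 : M^2 < dp^2 := by
      rw [hdp2]
      have e2 : M^2 * q = (1 - q) * (γ₂ - γ₁) := by
        rw [hq]; field_simp; ring
      have hq0 : 0 < q := lt_trans hα0 hαq
      rw [div_mul_eq_mul_div, lt_div_iff₀ hp0]
      have f1 : M^2 * p ≤ M^2 * q := mul_le_mul_of_nonneg_left hpq.le (sq_nonneg M)
      have f2 : (1 - q) * (γ₂ - γ₁) < (1 - p) * (γ₂ - γ₁) :=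
        mul_lt_mul_of_pos_right (by linarith) hΔ
      linarith
    nlinarith
  -- the two points
  obtain ⟨u, hu⟩ : ∃ u, u = μ + (g + dp)*s := ⟨_, rfl⟩
  obtain ⟨x1, hx1⟩ : ∃ x1, x1 = μ + (g - p*dp/(1 - p))*s := ⟨_, rfl⟩
  have hcu : c < u := by
    rw [hu]
    have : (c - μ)/s < g + dp := by rw [hK] at hKM; nlinarith [hKM, hdpM]
    rw [div_lt_iff₀ hs0] at this
    linarith
  refine ⟨ENNReal.ofReal (1 - p) • Measure.dirac x1 + ENNReal.ofReal p • Measure.dirac u,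
    twopoint_prob x1 u p hp0.le hp1.le, twopoint_memℒp x1 u p hp0.le hp1.le, ?_, ?_, ?_⟩
  · rw [integral_twopoint x1 u p hp0.le hp1.le (fun t => t)]
    have : (1 - p) * x1 + p * u = μ + g * s := by
      rw [hx1, hu]; field_simp; ring
    rw [this]
    have : (μ + g*s - μ)^2 = γ₁ * Sig := by rw [← hg2, ← hs2]; ring
    linarith
  · rw [integral_twopoint x1 u p hp0.le hp1.le (fun t => (t - μ)^2)]
    have key : (1 - p) * (x1 - μ)^2 + p * (u - μ)^2 = γ₂ * Sig := by
      rw [hx1, hu]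
      have e3 : p * dp^2 = (1 - p) * (γ₂ - γ₁) := by rw [hdp2]; field_simp
      have h1pne : (1:ℝ) - p ≠ 0 := ne_of_gt h1p
      field_simp
      linear_combination (s^2)*e3 + ((1 - p)*s^2)*hg2 + ((1 - p)*γ₂)*hs2
    linarith [key.le]
  · have hSmeas : MeasurableSet {t : ℝ | t ≤ c} := measurableSet_Iic
    have hdu : Measure.dirac u {t : ℝ | t ≤ c} = 0 := by
      rw [Measure.dirac_apply' _ hSmeas]
      simp only [Set.indicator_apply, Set.mem_setOf_eq]
      rw [if_neg (by linarith : ¬ u ≤ c)]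
    have hle : (ENNReal.ofReal (1 - p) • Measure.dirac x1 + ENNReal.ofReal p • Measure.dirac u)
        {t : ℝ | t ≤ c} ≤ ENNReal.ofReal (1 - p) := by
      rw [Measure.add_apply, Measure.smul_apply, Measure.smul_apply, hdu]
      simp only [smul_eq_mul, mul_zero, add_zero]
      calc ENNReal.ofReal (1 - p) * Measure.dirac x1 {t : ℝ | t ≤ c}
          ≤ ENNReal.ofReal (1 - p) * 1 := by
            exact mul_le_mul_right (prob_le_one) _
        _ = ENNReal.ofReal (1 - p) := mul_one _
    calc ((ENNReal.ofReal (1 - p) • Measure.dirac x1 + ENNReal.ofReal p • Measure.dirac u)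
          {t : ℝ | t ≤ c}).toReal
        ≤ (ENNReal.ofReal (1 - p)).toReal := ENNReal.toReal_mono ENNReal.ofReal_ne_top hle
      _ = 1 - p := ENNReal.toReal_ofReal h1p.le
      _ < 1 - α := by linarith


lemma neg_prob (P : Measure ℝ) [IsProbabilityMeasure P] :
    IsProbabilityMeasure (P.map (fun t : ℝ => -t)) :=
  Measure.isProbabilityMeasure_map measurable_neg.aemeasurable

lemma neg_memℒp (P : Measure ℝ) [IsProbabilityMeasure P] (h2 : MemLp (id : ℝ → ℝ) 2 P) :
    MemLp (id : ℝ → ℝ) 2 (P.map (fun t : ℝ => -t)) := by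
  rw [memLp_map_measure_iff aestronglyMeasurable_id measurable_neg.aemeasurable]
  have := h2.neg
  exact this

lemma neg_integral (P : Measure ℝ) [IsProbabilityMeasure P] (f : ℝ → ℝ)
    (hf : AEStronglyMeasurable f (P.map (fun t : ℝ => -t))) :
    ∫ t, f t ∂(P.map (fun t : ℝ => -t)) = ∫ t, f (-t) ∂P :=
  integral_map measurable_neg.aemeasurable hf

lemma neg_mean (P : Measure ℝ) [IsProbabilityMeasure P] :
    ∫ t, t ∂(P.map (fun t : ℝ => -t)) = - ∫ t, t ∂P := by
  rw [neg_integral P (fun t => t) aestronglyMeasurable_id]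
  exact integral_neg _

lemma neg_secondmoment (P : Measure ℝ) [IsProbabilityMeasure P] (μ : ℝ) :
    ∫ t, (t - μ)^2 ∂(P.map (fun t : ℝ => -t)) = ∫ t, (t - (-μ))^2 ∂P := by
  rw [neg_integral P (fun t => (t - μ)^2)
    ((measurable_id.sub_const μ).pow_const 2).aestronglyMeasurable]
  congr 1
  funext t
  ring

lemma prob_compl_le (P : Measure ℝ) [IsProbabilityMeasure P] (c : ℝ) :
    (P {t : ℝ | t ≤ c}).toReal = 1 - (P {t : ℝ | c < t}).toReal := by
  have hset : {t : ℝ | t ≤ c} = {t : ℝ | c < t}ᶜ := by ext t; simp [not_lt]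
  rw [hset, prob_compl_eq_one_sub (show MeasurableSet {t : ℝ | c < t} from measurableSet_Ioi),
    ENNReal.toReal_sub_of_le prob_le_one ENNReal.one_ne_top, ENNReal.toReal_one]

lemma prob_compl_ge (P : Measure ℝ) [IsProbabilityMeasure P] (c : ℝ) :
    (P {t : ℝ | c ≤ t}).toReal = 1 - (P {t : ℝ | t < c}).toReal := by
  have hset : {t : ℝ | c ≤ t} = {t : ℝ | t < c}ᶜ := by ext t; simp [not_lt]
  rw [hset, prob_compl_eq_one_sub (show MeasurableSet {t : ℝ | t < c} from measurableSet_Iio),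
    ENNReal.toReal_sub_of_le prob_le_one ENNReal.one_ne_top, ENNReal.toReal_one]

lemma dirac_memℒp (x : ℝ) : MemLp (id : ℝ → ℝ) 2 (Measure.dirac x) := by
  have hae : (fun _ : ℝ => x) =ᵐ[Measure.dirac x] (id : ℝ → ℝ) := by
    rw [Filter.EventuallyEq, ae_dirac_eq]
    exact Filter.eventually_pure.2 rfl
  exact (memLp_const x).ae_eq hae

/-- First case of the paper's Theorem 1: under `γ₁/γ₂ ≤ α`, the distributionally
robust chance constraint over the moment ambiguity set `D` is equivalent to a
second-order cone constraint. -/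
theorem stmt_0
    (α γ₁ γ₂ Sig μ b y : ℝ)
    (hα0 : 0 < α) (hα1 : α < 1) (hγ₁ : 0 < γ₁) (hγ₂ : 1 < γ₂) (hSig : 0 < Sig)
    (hcase : γ₁ / γ₂ ≤ α)
    (l : ℝ) (hl : l = Real.sqrt γ₁ + Real.sqrt (((1 - α) / α) * (γ₂ - γ₁)))
    (D : Set (Measure ℝ))
    (hD : D = {P : Measure ℝ | IsProbabilityMeasure P ∧ MemLp (id : ℝ → ℝ) 2 P ∧
      ((∫ t, t ∂P) - μ) ^ 2 ≤ γ₁ * Sig ∧ (∫ t, (t - μ) ^ 2 ∂P) ≤ γ₂ * Sig}) :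
    (∀ P ∈ D, 1 - α ≤ (P {t : ℝ | t * y ≤ b}).toReal) ↔
      μ * y + l * Real.sqrt (Sig * y ^ 2) ≤ b := by
  subst hD
  have hγ₂0 : (0:ℝ) < γ₂ := by linarith
  have hcase' : γ₁ ≤ α * γ₂ := by
    rw [div_le_iff₀ hγ₂0] at hcase; linarith
  have hs0 : 0 < Real.sqrt Sig := Real.sqrt_pos.2 hSig
  have hl0 : 0 ≤ l := by
    rw [hl]; positivity
  constructor
  · -- (a) → (b)
    intro h
    by_contra hb
    push_neg at hb
    rcases lt_trichotomy y 0 with hy | hy | hy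
    · -- y < 0
      have hsqy : Real.sqrt (Sig * y^2) = Real.sqrt Sig * (-y) := by
        rw [Real.sqrt_mul hSig.le, Real.sqrt_sq_eq_abs, abs_of_neg hy]
      have hcb : -(b/y) < -μ + l * Real.sqrt Sig := by
        have h1 : μ - l * Real.sqrt Sig < b / y := by
          rw [lt_div_iff_of_neg hy]; nlinarith [hb, hsqy]
        linarith
      rw [hl] at hcb
      obtain ⟨Q, hQprob, hQmem, hQm, hQv, hQtail⟩ :=
        construct_aux α γ₁ γ₂ Sig (-μ) (-(b/y)) hα0 hα1 hγ₁ hcase' hSig hcb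
      haveI := hQprob
      have hPm : ((∫ t, t ∂(Q.map (fun t : ℝ => -t))) - μ)^2 ≤ γ₁ * Sig := by
        rw [neg_mean Q]; nlinarith [hQm]
      have hPv : (∫ t, (t - μ)^2 ∂(Q.map (fun t : ℝ => -t))) ≤ γ₂ * Sig := by
        rw [neg_secondmoment Q μ]; exact hQv
      have hmem : (Q.map (fun t : ℝ => -t)) ∈ {P : Measure ℝ | IsProbabilityMeasure P ∧
          MemLp (id : ℝ → ℝ) 2 P ∧ ((∫ t, t ∂P) - μ) ^ 2 ≤ γ₁ * Sig ∧
          (∫ t, (t - μ) ^ 2 ∂P) ≤ γ₂ * Sig} :=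
        ⟨neg_prob Q, neg_memℒp Q hQmem, hPm, hPv⟩
      have hP := h _ hmem
      have hset : {t : ℝ | t * y ≤ b} = {t : ℝ | b/y ≤ t} := by
        ext t; simp only [Set.mem_setOf_eq]
        rw [div_le_iff_of_neg hy]
      have hmap : (Q.map (fun t : ℝ => -t)) {t : ℝ | b/y ≤ t} = Q {t : ℝ | t ≤ -(b/y)} := by
        rw [Measure.map_apply measurable_neg
          (show MeasurableSet {t : ℝ | b/y ≤ t} from measurableSet_Ici)]
        congr 1
        ext t
        simp only [Set.mem_preimage, Set.mem_setOf_eq]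
        constructor <;> intro <;> linarith
      rw [hset, hmap] at hP
      linarith
    · -- y = 0
      have hb0 : b < 0 := by
        rw [hy] at hb; simpa using hb
      have hmem : Measure.dirac μ ∈ {P : Measure ℝ | IsProbabilityMeasure P ∧
          MemLp (id : ℝ → ℝ) 2 P ∧ ((∫ t, t ∂P) - μ) ^ 2 ≤ γ₁ * Sig ∧
          (∫ t, (t - μ) ^ 2 ∂P) ≤ γ₂ * Sig} := by
        refine ⟨Measure.dirac.isProbabilityMeasure, dirac_memℒp μ, ?_, ?_⟩
        · rw [integral_dirac (fun t : ℝ => t) μ]; simp; positivity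
        · rw [integral_dirac (fun t : ℝ => (t - μ)^2) μ]; simp; positivity
      have hP := h _ hmem
      have hempty : {t : ℝ | t * y ≤ b} = ∅ := by
        ext t; simp [hy]; linarith
      rw [hempty] at hP
      simp at hP
      linarith
    · -- y > 0
      have hsqy : Real.sqrt (Sig * y^2) = Real.sqrt Sig * y := by
        rw [Real.sqrt_mul hSig.le, Real.sqrt_sq_eq_abs, abs_of_pos hy]
      have hcb : b/y < μ + l * Real.sqrt Sig := by
        rw [div_lt_iff₀ hy]; nlinarith [hb, hsqy]
      rw [hl] at hcb
      obtain ⟨P, hPprob, hPmem, hPm, hPv, hPtail⟩ :=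
        construct_aux α γ₁ γ₂ Sig μ (b/y) hα0 hα1 hγ₁ hcase' hSig hcb
      haveI := hPprob
      have hP := h P ⟨hPprob, hPmem, hPm, hPv⟩
      have hset : {t : ℝ | t * y ≤ b} = {t : ℝ | t ≤ b/y} := by
        ext t; simp only [Set.mem_setOf_eq]
        rw [le_div_iff₀ hy]
      rw [hset] at hP
      linarith
  · -- (b) → (a)
    intro hb P hP
    obtain ⟨hPprob, hPmem, hPm, hPv⟩ := hP
    haveI := hPprob
    rcases lt_trichotomy y 0 with hy | hy | hy
    · -- y < 0
      have hsqy : Real.sqrt (Sig * y^2) = Real.sqrt Sig * (-y) := by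
        rw [Real.sqrt_mul hSig.le, Real.sqrt_sq_eq_abs, abs_of_neg hy]
      have hc : -μ + l * Real.sqrt Sig ≤ -(b/y) := by
        have h1 : b/y ≤ μ - l * Real.sqrt Sig := by
          rw [div_le_iff_of_neg hy]; nlinarith [hb, hsqy]
        linarith
      rw [hl] at hc
      haveI := neg_prob P
      have hQm : ((∫ t, t ∂(P.map (fun t : ℝ => -t))) - (-μ))^2 ≤ γ₁ * Sig := by
        rw [neg_mean P]; nlinarith [hPm]
      have hQv : (∫ t, (t - (-μ))^2 ∂(P.map (fun t : ℝ => -t))) ≤ γ₂ * Sig := by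
        rw [neg_secondmoment P (-μ)]; simpa using hPv
      have htail := forward_aux α γ₁ γ₂ Sig (-μ) (-(b/y)) hα0 hα1 hγ₁ hcase' hSig hc
        (P.map (fun t : ℝ => -t)) (neg_memℒp P hPmem) hQm hQv
      have hmap : (P.map (fun t : ℝ => -t)) {t : ℝ | -(b/y) < t} = P {t : ℝ | t < b/y} := by
        rw [Measure.map_apply measurable_neg
          (show MeasurableSet {t : ℝ | -(b/y) < t} from measurableSet_Ioi)]
        congr 1
        ext t
        simp only [Set.mem_preimage, Set.mem_setOf_eq]
        constructor <;> intro <;> linarith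
      rw [hmap] at htail
      have hset : {t : ℝ | t * y ≤ b} = {t : ℝ | b/y ≤ t} := by
        ext t; simp only [Set.mem_setOf_eq]
        rw [div_le_iff_of_neg hy]
      rw [hset, prob_compl_ge P (b/y)]
      linarith
    · -- y = 0
      have hb0 : 0 ≤ b := by
        rw [hy] at hb; simpa using hb
      have huniv : {t : ℝ | t * y ≤ b} = Set.univ := by
        ext t; simp [hy]; linarith
      rw [huniv]
      simp
      linarith
    · -- y > 0
      have hsqy : Real.sqrt (Sig * y^2) = Real.sqrt Sig * y := by
        rw [Real.sqrt_mul hSig.le, Real.sqrt_sq_eq_abs, abs_of_pos hy]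
      have hc : μ + l * Real.sqrt Sig ≤ b/y := by
        rw [le_div_iff₀ hy]; nlinarith [hb, hsqy]
      rw [hl] at hc
      have htail := forward_aux α γ₁ γ₂ Sig μ (b/y) hα0 hα1 hγ₁ hcase' hSig hc
        P hPmem hPm hPv
      have hset : {t : ℝ | t * y ≤ b} = {t : ℝ | t ≤ b/y} := by
        ext t; simp only [Set.mem_setOf_eq]
        rw [le_div_iff₀ hy]
      rw [hset, prob_compl_le P (b/y)]
      linarith
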